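/- Let W be the lazy random walk on a finite simple connected regular graph G = (V,E), s ≥ t_mix + 1, and let A_1, A_2, A_3 ⊂ ℕ be finite intervals with min(A_1) ≥ s and min(A_{i+1}) − max(A_i) ≥ s for i = 1,2. Then for every starting vertex ρ: P_ρ(R^W(A_1) ∩ R^W(A_2) ≠ ∅ and R^W(A_1) ∩ R^W(A_3) ≠ ∅) ≤ 8·(#A_1)²·#A_2·#A_3 / (#V)². -/

import Mathlib

open Finset

variable {V : Type*} [Fintype V] [DecidableEq V] [Nonempty V]

/-- One-step transition kernel of the lazy random walk on `G`:
stay put with probability `1/2`, otherwise move to a uniformly chosen neighbour. -/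
noncomputable def lazyStep (G : SimpleGraph V) [DecidableRel G.Adj] (x y : V) : ℝ :=
  if x = y then 1 / 2 else if G.Adj x y then 1 / (2 * (G.degree x : ℝ)) else 0

/-- `n`-step transition probabilities of the lazy random walk. -/
noncomputable def lazyProb (G : SimpleGraph V) [DecidableRel G.Adj] : ℕ → V → V → ℝ
  | 0, x, y => if x = y then 1 else 0
  | n + 1, x, y => ∑ z : V, lazyStep G x z * lazyProb G n z y

/-- The stationary (degree-biased) distribution `π(x) = deg(x)/(2#E)`. -/
noncomputable def statDist (G : SimpleGraph V) [DecidableRel G.Adj] (x : V) : ℝ :=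
  (G.degree x : ℝ) / (2 * (G.edgeFinset.card : ℝ))

/-- The uniform `(ℓ∞, 1/4)` mixing time. -/
noncomputable def tmix (G : SimpleGraph V) [DecidableRel G.Adj] : ℕ :=
  sInf {n : ℕ | ∀ x y : V, |lazyProb G n x y / statDist G y - 1| ≤ 1 / 4}

/-- Extension of a finite path to all of `ℕ` (constant after time `N`). -/
def extPath (N : ℕ) (γ : Fin (N + 1) → V) : ℕ → V :=
  fun n => γ ⟨min n N, Nat.lt_succ_of_le (min_le_right n N)⟩

/-- Weight of a finite path under the lazy random walk kernel. -/
noncomputable def pathWeight (G : SimpleGraph V) [DecidableRel G.Adj]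
    (N : ℕ) (γ : Fin (N + 1) → V) : ℝ :=
  ∏ i ∈ Finset.range N, lazyStep G (extPath N γ i) (extPath N γ (i + 1))

open Classical in
/-- Probability, for the lazy random walk started at `ρ`, of a path event
depending only on the first `N+1` coordinates. -/
noncomputable def walkProb (G : SimpleGraph V) [DecidableRel G.Adj]
    (ρ : V) (N : ℕ) (E : (ℕ → V) → Prop) : ℝ :=
  ∑ γ : Fin (N + 1) → V,
    if extPath N γ 0 = ρ ∧ E (extPath N γ) then pathWeight G N γ else 0

open Classical in
/-- Expectation, for the lazy random walk started at `ρ`, of a path functional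
depending only on the first `N+1` coordinates. -/
noncomputable def walkExp (G : SimpleGraph V) [DecidableRel G.Adj]
    (ρ : V) (N : ℕ) (f : (ℕ → V) → ℝ) : ℝ :=
  ∑ γ : Fin (N + 1) → V,
    if extPath N γ 0 = ρ then pathWeight G N γ * f (extPath N γ) else 0

open Classical in
/-- Probability of a path event for the lazy random walk started from `π`. -/
noncomputable def walkProbStat (G : SimpleGraph V) [DecidableRel G.Adj]
    (N : ℕ) (E : (ℕ → V) → Prop) : ℝ :=
  ∑ γ : Fin (N + 1) → V,
    if E (extPath N γ) then statDist G (extPath N γ 0) * pathWeight G N γ else 0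

/-- Expectation of a path functional for the lazy random walk started from `π`. -/
noncomputable def walkExpStat (G : SimpleGraph V) [DecidableRel G.Adj]
    (N : ℕ) (f : (ℕ → V) → ℝ) : ℝ :=
  ∑ γ : Fin (N + 1) → V,
    statDist G (extPath N γ 0) * pathWeight G N γ * f (extPath N γ)

open Classical in
/-- Probability of a joint event for two independent lazy random walks,
each started from the stationary distribution. -/
noncomputable def twoWalkProbStat (G : SimpleGraph V) [DecidableRel G.Adj]
    (N : ℕ) (E : (ℕ → V) → (ℕ → V) → Prop) : ℝ :=
  ∑ γ₁ : Fin (N + 1) → V, ∑ γ₂ : Fin (N + 1) → V,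
    if E (extPath N γ₁) (extPath N γ₂) then
      (statDist G (extPath N γ₁ 0) * pathWeight G N γ₁) *
      (statDist G (extPath N γ₂ 0) * pathWeight G N γ₂) else 0

open Classical in
/-- Probability of a joint event for two independent lazy random walks,
both started at the vertex `ρ`. -/
noncomputable def twoWalkProbFrom (G : SimpleGraph V) [DecidableRel G.Adj]
    (ρ : V) (N : ℕ) (E : (ℕ → V) → (ℕ → V) → Prop) : ℝ :=
  ∑ γ₁ : Fin (N + 1) → V, ∑ γ₂ : Fin (N + 1) → V,
    if extPath N γ₁ 0 = ρ ∧ extPath N γ₂ 0 = ρ ∧ E (extPath N γ₁) (extPath N γ₂) then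
      pathWeight G N γ₁ * pathWeight G N γ₂ else 0

/-- Range of a path over a finite set of times. -/
def walkRange (w : ℕ → V) (A : Finset ℕ) : Finset V := A.image w

/-- `q̄^G(s)`: averaged intersection probability of two independent lazy walks
started at the same (uniform) vertex. -/
noncomputable def qbar (G : SimpleGraph V) [DecidableRel G.Adj] (s : ℕ) : ℝ :=
  (1 / (Fintype.card V : ℝ)) * ∑ ρ : V,
    twoWalkProbFrom G ρ s (fun w₁ w₂ =>
      (walkRange w₁ (Finset.Icc 0 s) ∩ walkRange w₂ (Finset.Icc 1 s)).Nonempty)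

/-- `H^W_ρ(m) = Σ_{i=0}^m Σ_{j=0}^m P_ρ(W(i+j)=ρ)`. -/
noncomputable def HW (G : SimpleGraph V) [DecidableRel G.Adj] (ρ : V) (m : ℕ) : ℝ :=
  ∑ i ∈ Finset.range (m + 1), ∑ j ∈ Finset.range (m + 1), lazyProb G (i + j) ρ ρ

/-! ### Auxiliary development -/

set_option linter.unusedSectionVars false

section Aux

variable (G : SimpleGraph V) [DecidableRel G.Adj]

lemma lazyStep_nonneg (x y : V) : 0 ≤ lazyStep G x y := by
  unfold lazyStep
  split_ifs with h1 h2 <;> positivity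

lemma lazyStep_eq_add (x y : V) :
    lazyStep G x y = (if x = y then (1 / 2 : ℝ) else 0) +
      (if G.Adj x y then 1 / (2 * (G.degree x : ℝ)) else 0) := by
  unfold lazyStep
  by_cases h1 : x = y
  · subst h1; simp [G.loopless.irrefl x]
  · simp [h1]

lemma lazyStep_self (x : V) : lazyStep G x x = 1 / 2 := by simp [lazyStep]

lemma lazyStep_sum (hdeg : ∀ x, 0 < G.degree x) (x : V) :
    ∑ y : V, lazyStep G x y = 1 := by
  have h0 : ((G.degree x : ℝ)) ≠ 0 := by
    exact_mod_cast (hdeg x).ne'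
  simp only [lazyStep_eq_add]
  rw [Finset.sum_add_distrib]
  have h1 : ∑ y : V, (if x = y then (1 / 2 : ℝ) else 0) = 1 / 2 := by
    simp
  have h2 : ∑ y : V, (if G.Adj x y then 1 / (2 * (G.degree x : ℝ)) else 0)
      = (G.degree x : ℝ) * (1 / (2 * (G.degree x : ℝ))) := by
    rw [← Finset.sum_filter]
    rw [← SimpleGraph.neighborFinset_eq_filter, Finset.sum_const,
      SimpleGraph.card_neighborFinset_eq_degree, nsmul_eq_mul]
  rw [h1, h2]
  field_simp
  ring

lemma lazyProb_nonneg (n : ℕ) (x y : V) : 0 ≤ lazyProb G n x y := by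
  induction n generalizing x with
  | zero => unfold lazyProb; positivity
  | succ n ih =>
    unfold lazyProb
    exact Finset.sum_nonneg fun z _ => mul_nonneg (lazyStep_nonneg G x z) (ih z)

lemma lazyProb_sum (hdeg : ∀ x, 0 < G.degree x) (n : ℕ) (x : V) :
    ∑ y : V, lazyProb G n x y = 1 := by
  induction n generalizing x with
  | zero => simp [lazyProb]
  | succ n ih =>
    unfold lazyProb
    rw [Finset.sum_comm]
    have : ∀ z : V, ∑ y : V, lazyStep G x z * lazyProb G n z y = lazyStep G x z := by
      intro z
      rw [← Finset.mul_sum, ih z, mul_one]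
    simp_rw [this]
    exact lazyStep_sum G hdeg x

lemma lazyProb_one (x y : V) : lazyProb G 1 x y = lazyStep G x y := by
  show (∑ z : V, lazyStep G x z * lazyProb G 0 z y) = _
  unfold lazyProb
  simp [mul_ite]

lemma lazyProb_add (m n : ℕ) (x y : V) :
    lazyProb G (m + n) x y = ∑ z : V, lazyProb G m x z * lazyProb G n z y := by
  induction m generalizing x with
  | zero =>
    simp only [Nat.zero_add]
    unfold lazyProb
    simp [ite_mul]
  | succ m ih =>
    have h : m + 1 + n = (m + n) + 1 := by omega
    rw [h]
    show (∑ z : V, lazyStep G x z * lazyProb G (m + n) z y) = _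
    have h2 : ∀ z, lazyProb G (m + 1) x z = ∑ w : V, lazyStep G x w * lazyProb G m w z :=
      fun z => rfl
    simp_rw [h2, Finset.sum_mul, ih]
    rw [Finset.sum_comm]
    congr 1; ext w
    rw [Finset.mul_sum]
    congr 1; ext z
    ring

lemma lazyStep_symm {d : ℕ} (hreg : G.IsRegularOfDegree d) (x y : V) :
    lazyStep G x y = lazyStep G y x := by
  unfold lazyStep
  rw [hreg x, hreg y]
  by_cases h1 : x = y
  · simp [h1]
  · have h1' : ¬ y = x := fun h => h1 h.symm
    simp only [h1, h1', if_false]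
    by_cases h2 : G.Adj x y
    · simp [h2, G.adj_symm h2]
    · have h2' : ¬ G.Adj y x := fun h => h2 (G.adj_symm h)
      simp [h2, h2']

lemma lazyProb_symm {d : ℕ} (hreg : G.IsRegularOfDegree d) (n : ℕ) (x y : V) :
    lazyProb G n x y = lazyProb G n y x := by
  induction n generalizing x y with
  | zero => unfold lazyProb; simp [eq_comm]
  | succ n ih =>
    show (∑ z : V, lazyStep G x z * lazyProb G n z y) = _
    have : (n + 1) = n + 1 := rfl
    rw [show (n + 1) = n + 1 from rfl, lazyProb_add G n 1]
    congr 1; ext z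
    rw [lazyProb_one, ih z y, lazyStep_symm G hreg x z]
    ring

lemma lazyProb_col_sum {d : ℕ} (hreg : G.IsRegularOfDegree d)
    (hdeg : ∀ x, 0 < G.degree x) (n : ℕ) (y : V) :
    ∑ x : V, lazyProb G n x y = 1 := by
  have : ∀ x : V, lazyProb G n x y = lazyProb G n y x := fun x => lazyProb_symm G hreg n x y
  simp_rw [this]
  exact lazyProb_sum G hdeg n y

lemma degree_pos (hconn : G.Connected) (hcard : 2 ≤ Fintype.card V) (x : V) :
    0 < G.degree x := by
  rw [SimpleGraph.degree_pos_iff_exists_adj]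
  obtain ⟨y, hy⟩ := Fintype.exists_ne_of_one_lt_card (by omega) x
  obtain ⟨w⟩ := hconn.preconnected x y
  cases w with
  | nil => exact absurd rfl (Ne.symm hy)
  | cons h p => exact ⟨_, h⟩

lemma lazyProb_le_one (hdeg : ∀ x, 0 < G.degree x) (n : ℕ) (x y : V) :
    lazyProb G n x y ≤ 1 := by
  have h := lazyProb_sum G hdeg n x
  have : lazyProb G n x y ≤ ∑ z : V, lazyProb G n x z :=
    Finset.single_le_sum (fun z _ => lazyProb_nonneg G n x z) (Finset.mem_univ y)
  linarith

lemma lazyProb_pos_step {x y : V} {n : ℕ} (h : 0 < lazyProb G n x y) :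
    0 < lazyProb G (n + 1) x y := by
  show 0 < ∑ z : V, lazyStep G x z * lazyProb G n z y
  have hterm : 0 < lazyStep G x x * lazyProb G n x y := by
    rw [lazyStep_self]; positivity
  have hle : lazyStep G x x * lazyProb G n x y ≤ ∑ z : V, lazyStep G x z * lazyProb G n z y :=
    Finset.single_le_sum
      (fun z _ => mul_nonneg (lazyStep_nonneg G x z) (lazyProb_nonneg G n z y))
      (Finset.mem_univ x)
  linarith

lemma lazyProb_pos_adj (hdeg : ∀ x, 0 < G.degree x) {x z y : V} {n : ℕ}
    (hxz : G.Adj x z) (h : 0 < lazyProb G n z y) :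
    0 < lazyProb G (n + 1) x y := by
  show 0 < ∑ w : V, lazyStep G x w * lazyProb G n w y
  have hK : 0 < lazyStep G x z := by
    unfold lazyStep
    have hne : x ≠ z := G.ne_of_adj hxz
    have : (0:ℝ) < (G.degree x : ℝ) := by exact_mod_cast hdeg x
    simp only [hne, if_false, hxz, if_true]
    positivity
  have hterm : 0 < lazyStep G x z * lazyProb G n z y := mul_pos hK h
  have hle : lazyStep G x z * lazyProb G n z y ≤ ∑ w : V, lazyStep G x w * lazyProb G n w y :=
    Finset.single_le_sum
      (fun w _ => mul_nonneg (lazyStep_nonneg G x w) (lazyProb_nonneg G n w y))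
      (Finset.mem_univ z)
  linarith

lemma lazyProb_pos_walk (hdeg : ∀ x, 0 < G.degree x) :
    ∀ {x y : V} (w : G.Walk x y), 0 < lazyProb G w.length x y := by
  intro x y w
  induction w with
  | nil => simp [lazyProb]
  | cons h p ih => exact lazyProb_pos_adj G hdeg h ih

lemma lazyProb_pos_ge (hdeg : ∀ x, 0 < G.degree x) {x y : V} {n : ℕ}
    (h : 0 < lazyProb G n x y) : ∀ m, n ≤ m → 0 < lazyProb G m x y := by
  intro m hm
  induction m, hm using Nat.le_induction with
  | base => exact h
  | succ m hm ih => exact lazyProb_pos_step G ih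

lemma exists_uniform_pos (hconn : G.Connected) (hdeg : ∀ x, 0 < G.degree x) :
    ∃ (M : ℕ) (ε : ℝ), 0 < ε ∧ ∀ x y, ε ≤ lazyProb G M x y := by
  have hlen : ∀ x y : V, ∃ n, 0 < lazyProb G n x y := by
    intro x y
    obtain ⟨w⟩ := hconn.preconnected x y
    exact ⟨w.length, lazyProb_pos_walk G hdeg w⟩
  choose L hL using hlen
  set M := Finset.univ.sup (fun p : V × V => L p.1 p.2) with hM
  have hpos : ∀ x y, 0 < lazyProb G M x y := by
    intro x y
    refine lazyProb_pos_ge G hdeg (hL x y) M ?_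
    exact Finset.le_sup (f := fun p : V × V => L p.1 p.2) (Finset.mem_univ (x, y))
  obtain ⟨p₀, _, hp₀⟩ := Finset.exists_min_image Finset.univ
    (fun p : V × V => lazyProb G M p.1 p.2) ⟨(Classical.arbitrary V, Classical.arbitrary V),
      Finset.mem_univ _⟩
  exact ⟨M, lazyProb G M p₀.1 p₀.2, hpos p₀.1 p₀.2,
    fun x y => hp₀ (x, y) (Finset.mem_univ _)⟩

lemma contraction_step (hdeg : ∀ x, 0 < G.degree x) {M : ℕ} {ε : ℝ}
    (hM : ∀ x y, ε ≤ lazyProb G M x y)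
    {n : ℕ} {D : ℝ} (hD0 : 0 ≤ D)
    (hD : ∀ z z' y, lazyProb G n z y - lazyProb G n z' y ≤ D)
    (x x' y : V) :
    lazyProb G (M + n) x y - lazyProb G (M + n) x' y
      ≤ (1 - (Fintype.card V : ℝ) * ε) * D := by
  obtain ⟨z₀, _, hz₀⟩ := Finset.exists_min_image Finset.univ
    (fun z => lazyProb G n z y) ⟨Classical.arbitrary V, Finset.mem_univ _⟩
  set a := lazyProb G n z₀ y with ha
  have key : lazyProb G (M + n) x y - lazyProb G (M + n) x' y
      = ∑ z : V, (lazyProb G M x z - lazyProb G M x' z) * (lazyProb G n z y - a) := by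
    rw [lazyProb_add G M n x y, lazyProb_add G M n x' y]
    have h1 : ∑ z : V, (lazyProb G M x z - lazyProb G M x' z) * (lazyProb G n z y - a)
        = ∑ z : V, lazyProb G M x z * lazyProb G n z y
          - ∑ z : V, lazyProb G M x' z * lazyProb G n z y
          - ((∑ z : V, lazyProb G M x z) - ∑ z : V, lazyProb G M x' z) * a := by
      simp only [sub_mul, mul_sub, Finset.sum_sub_distrib, Finset.sum_mul]
    rw [h1, lazyProb_sum G hdeg M x, lazyProb_sum G hdeg M x']
    ring
  rw [key]
  have hterm : ∀ z : V, (lazyProb G M x z - lazyProb G M x' z) * (lazyProb G n z y - a)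
      ≤ max (lazyProb G M x z - lazyProb G M x' z) 0 * D := by
    intro z
    set dz := lazyProb G M x z - lazyProb G M x' z
    have hq0 : 0 ≤ lazyProb G n z y - a := by
      have := hz₀ z (Finset.mem_univ z); linarith
    have hqD : lazyProb G n z y - a ≤ D := hD z z₀ y
    rcases le_or_gt dz 0 with hdz | hdz
    · calc dz * (lazyProb G n z y - a) ≤ 0 := mul_nonpos_of_nonpos_of_nonneg hdz hq0
        _ ≤ max dz 0 * D := mul_nonneg (le_max_right _ _) hD0
    · rw [max_eq_left hdz.le]
      exact mul_le_mul_of_nonneg_left hqD hdz.le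
  calc ∑ z : V, (lazyProb G M x z - lazyProb G M x' z) * (lazyProb G n z y - a)
      ≤ ∑ z : V, max (lazyProb G M x z - lazyProb G M x' z) 0 * D :=
        Finset.sum_le_sum fun z _ => hterm z
    _ = (∑ z : V, max (lazyProb G M x z - lazyProb G M x' z) 0) * D := by
        rw [Finset.sum_mul]
    _ ≤ (1 - (Fintype.card V : ℝ) * ε) * D := by
        refine mul_le_mul_of_nonneg_right ?_ hD0
        have hmax : ∀ z : V, max (lazyProb G M x z - lazyProb G M x' z) 0
            ≤ lazyProb G M x z - ε := by
          intro z
          have h1 := hM x z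
          have h2 := hM x' z
          rcases le_or_gt (lazyProb G M x z - lazyProb G M x' z) 0 with h | h
          · rw [max_eq_right h]; linarith
          · rw [max_eq_left h.le]; linarith
        calc ∑ z : V, max (lazyProb G M x z - lazyProb G M x' z) 0
            ≤ ∑ z : V, (lazyProb G M x z - ε) := Finset.sum_le_sum fun z _ => hmax z
          _ = 1 - (Fintype.card V : ℝ) * ε := by
              rw [Finset.sum_sub_distrib, lazyProb_sum G hdeg, Finset.sum_const,
                Finset.card_univ, nsmul_eq_mul]

lemma osc_pow (hdeg : ∀ x, 0 < G.degree x) {M : ℕ} {ε : ℝ} (hε : 0 < ε)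
    (hM : ∀ x y, ε ≤ lazyProb G M x y) :
    ∀ (k : ℕ) (x x' y : V),
      lazyProb G (M * k) x y - lazyProb G (M * k) x' y
        ≤ (1 - (Fintype.card V : ℝ) * ε) ^ k := by
  have hc0 : 0 ≤ 1 - (Fintype.card V : ℝ) * ε := by
    have x := Classical.arbitrary V
    have h1 : ∑ y : V, lazyProb G M x y = 1 := lazyProb_sum G hdeg M x
    have h2 : (Fintype.card V : ℝ) * ε ≤ ∑ y : V, lazyProb G M x y := by
      calc (Fintype.card V : ℝ) * ε = ∑ _y : V, ε := by
            rw [Finset.sum_const, Finset.card_univ, nsmul_eq_mul]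
        _ ≤ ∑ y : V, lazyProb G M x y := Finset.sum_le_sum fun y _ => hM x y
    linarith
  intro k
  induction k with
  | zero =>
    intro x x' y
    simp only [Nat.mul_zero, pow_zero]
    have h1 : lazyProb G 0 x y ≤ 1 := lazyProb_le_one G hdeg 0 x y
    have h2 : 0 ≤ lazyProb G 0 x' y := lazyProb_nonneg G 0 x' y
    linarith
  | succ k ih =>
    intro x x' y
    have hMk : M * (k + 1) = M + M * k := by ring
    rw [hMk, pow_succ, mul_comm ((1 - (Fintype.card V : ℝ) * ε) ^ k)]
    exact contraction_step G hdeg hM (pow_nonneg hc0 k)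
      (fun z z' y' => ih z z' y') x x' y

lemma near_uniform (hconn : G.Connected) {d : ℕ} (hreg : G.IsRegularOfDegree d)
    (hdeg : ∀ x, 0 < G.degree x) {M : ℕ} {ε : ℝ} (hε : 0 < ε)
    (hM : ∀ x y, ε ≤ lazyProb G M x y) (k : ℕ) (x y : V) :
    |lazyProb G (M * k) x y - 1 / (Fintype.card V : ℝ)|
      ≤ (1 - (Fintype.card V : ℝ) * ε) ^ k := by
  have hN : (0:ℝ) < (Fintype.card V : ℝ) := by
    exact_mod_cast Fintype.card_pos
  have hcol := lazyProb_col_sum G hreg hdeg (M * k) y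
  have hrepr : lazyProb G (M * k) x y - 1 / (Fintype.card V : ℝ)
      = (1 / (Fintype.card V : ℝ)) *
        ∑ x' : V, (lazyProb G (M * k) x y - lazyProb G (M * k) x' y) := by
    rw [Finset.sum_sub_distrib, hcol, Finset.sum_const, Finset.card_univ, nsmul_eq_mul]
    field_simp
  rw [hrepr, abs_mul, abs_of_pos (by positivity : (0:ℝ) < 1 / (Fintype.card V : ℝ))]
  have habs : |∑ x' : V, (lazyProb G (M * k) x y - lazyProb G (M * k) x' y)|
      ≤ (Fintype.card V : ℝ) * (1 - (Fintype.card V : ℝ) * ε) ^ k := by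
    calc |∑ x' : V, (lazyProb G (M * k) x y - lazyProb G (M * k) x' y)|
        ≤ ∑ x' : V, |lazyProb G (M * k) x y - lazyProb G (M * k) x' y| :=
          Finset.abs_sum_le_sum_abs _ _
      _ ≤ ∑ _x' : V, (1 - (Fintype.card V : ℝ) * ε) ^ k := by
          refine Finset.sum_le_sum fun x' _ => ?_
          rw [abs_le]
          constructor
          · have := osc_pow G hdeg hε hM k x' x y; linarith
          · exact osc_pow G hdeg hε hM k x x' y
      _ = (Fintype.card V : ℝ) * (1 - (Fintype.card V : ℝ) * ε) ^ k := by
          rw [Finset.sum_const, Finset.card_univ, nsmul_eq_mul]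
  calc (1 / (Fintype.card V : ℝ)) * |∑ x' : V, (lazyProb G (M * k) x y - lazyProb G (M * k) x' y)|
      ≤ (1 / (Fintype.card V : ℝ)) *
        ((Fintype.card V : ℝ) * (1 - (Fintype.card V : ℝ) * ε) ^ k) := by
        exact mul_le_mul_of_nonneg_left habs (by positivity)
    _ = (1 - (Fintype.card V : ℝ) * ε) ^ k := by field_simp

lemma statDist_eq {d : ℕ} (hreg : G.IsRegularOfDegree d) (hdeg : ∀ x, 0 < G.degree x)
    (x : V) : statDist G x = 1 / (Fintype.card V : ℝ) := by
  unfold statDist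
  have hhs : ∑ v : V, G.degree v = 2 * G.edgeFinset.card :=
    SimpleGraph.sum_degrees_eq_twice_card_edges G
  have hsum : ∑ v : V, G.degree v = Fintype.card V * d := by
    simp [hreg _, Finset.sum_const, Finset.card_univ, mul_comm]
  have h2E : (2 * (G.edgeFinset.card : ℝ)) = (Fintype.card V : ℝ) * d := by
    have : (2 * G.edgeFinset.card : ℕ) = Fintype.card V * d := by omega
    exact_mod_cast this
  rw [hreg x, h2E]
  have hd0 : (0:ℝ) < (d:ℝ) := by
    have := hdeg x
    rw [hreg x] at this
    exact_mod_cast this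
  have hN : (0:ℝ) < (Fintype.card V : ℝ) := by exact_mod_cast Fintype.card_pos
  field_simp

lemma mixing_set_nonempty (hconn : G.Connected) {d : ℕ} (hreg : G.IsRegularOfDegree d)
    (hdeg : ∀ x, 0 < G.degree x) :
    {n : ℕ | ∀ x y : V, |lazyProb G n x y / statDist G y - 1| ≤ 1 / 4}.Nonempty := by
  obtain ⟨M, ε, hε, hM⟩ := exists_uniform_pos G hconn hdeg
  have hN : (0:ℝ) < (Fintype.card V : ℝ) := by exact_mod_cast Fintype.card_pos
  set c := 1 - (Fintype.card V : ℝ) * ε with hc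
  have hc0 : 0 ≤ c := by
    have x := Classical.arbitrary V
    have h2 : (Fintype.card V : ℝ) * ε ≤ ∑ y : V, lazyProb G M x y := by
      calc (Fintype.card V : ℝ) * ε = ∑ _y : V, ε := by
            rw [Finset.sum_const, Finset.card_univ, nsmul_eq_mul]
        _ ≤ _ := Finset.sum_le_sum fun y _ => hM x y
    rw [lazyProb_sum G hdeg M x] at h2
    simp only [hc]; linarith
  have hc1 : c < 1 := by
    simp only [hc]
    have : 0 < (Fintype.card V : ℝ) * ε := by positivity
    linarith
  obtain ⟨k, hk⟩ := exists_pow_lt_of_lt_one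
    (show (0:ℝ) < 1 / (4 * (Fintype.card V : ℝ)) by positivity) hc1
  refine ⟨M * k, ?_⟩
  intro x y
  rw [statDist_eq G hreg hdeg]
  have hnear := near_uniform G hconn hreg hdeg hε hM k x y
  have : |lazyProb G (M * k) x y - 1 / (Fintype.card V : ℝ)| ≤ 1 / (4 * (Fintype.card V : ℝ)) :=
    le_trans hnear hk.le
  have hq : lazyProb G (M * k) x y / (1 / (Fintype.card V : ℝ))
      = lazyProb G (M * k) x y * (Fintype.card V : ℝ) := by
    field_simp
  rw [abs_le] at this
  rw [hq, abs_le]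
  have h1 := mul_le_mul_of_nonneg_right this.1 hN.le
  have h2 := mul_le_mul_of_nonneg_right this.2 hN.le
  rw [neg_mul] at h1
  have e1 : (lazyProb G (M * k) x y - 1 / (Fintype.card V : ℝ)) * (Fintype.card V : ℝ)
      = lazyProb G (M * k) x y * (Fintype.card V : ℝ) - 1 := by field_simp
  have e2 : (1 / (4 * (Fintype.card V : ℝ))) * (Fintype.card V : ℝ) = 1 / 4 := by
    field_simp
  constructor
  · linarith [h1, e1, e2]
  · linarith [h2, e1, e2]

lemma lazyProb_tmix_le (hconn : G.Connected) {d : ℕ} (hreg : G.IsRegularOfDegree d)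
    (hdeg : ∀ x, 0 < G.degree x) (x y : V) :
    lazyProb G (tmix G) x y ≤ 5 / (4 * (Fintype.card V : ℝ)) := by
  have hmem := Nat.sInf_mem (mixing_set_nonempty G hconn hreg hdeg)
  have h : |lazyProb G (tmix G) x y / statDist G y - 1| ≤ 1 / 4 := hmem x y
  rw [statDist_eq G hreg hdeg] at h
  have hN : (0:ℝ) < (Fintype.card V : ℝ) := by exact_mod_cast Fintype.card_pos
  have hq : lazyProb G (tmix G) x y / (1 / (Fintype.card V : ℝ))
      = lazyProb G (tmix G) x y * (Fintype.card V : ℝ) := by field_simp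
  rw [hq] at h
  have h2 := (abs_le.mp h).2
  rw [le_div_iff₀ (show (0:ℝ) < 4 * (Fintype.card V : ℝ) by positivity)]
  have e : lazyProb G (tmix G) x y * (4 * (Fintype.card V : ℝ))
      = 4 * (lazyProb G (tmix G) x y * (Fintype.card V : ℝ)) := by ring
  linarith [h2, e]

lemma lazyProb_mix_le (hconn : G.Connected) {d : ℕ} (hreg : G.IsRegularOfDegree d)
    (hdeg : ∀ x, 0 < G.degree x) {n : ℕ} (hn : tmix G ≤ n) (x y : V) :
    lazyProb G n x y ≤ 5 / (4 * (Fintype.card V : ℝ)) := by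
  induction n, hn using Nat.le_induction generalizing x with
  | base => exact lazyProb_tmix_le G hconn hreg hdeg x y
  | succ n hn ih =>
    show (∑ z : V, lazyStep G x z * lazyProb G n z y) ≤ _
    calc ∑ z : V, lazyStep G x z * lazyProb G n z y
        ≤ ∑ z : V, lazyStep G x z * (5 / (4 * (Fintype.card V : ℝ))) :=
          Finset.sum_le_sum fun z _ =>
            mul_le_mul_of_nonneg_left (ih z) (lazyStep_nonneg G x z)
      _ = 5 / (4 * (Fintype.card V : ℝ)) := by
          rw [← Finset.sum_mul, lazyStep_sum G hdeg, one_mul]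

/-! #### Path space -/

lemma extPath_eq_of_le {N : ℕ} (γ : Fin (N + 1) → V) {i : ℕ} (h : i ≤ N) :
    extPath N γ i = γ ⟨i, Nat.lt_succ_of_le h⟩ := by
  unfold extPath
  exact congrArg γ (Fin.ext (min_eq_left h))

lemma extPath_snoc_of_le {N : ℕ} (γ : Fin (N + 1) → V) (v : V) {i : ℕ} (h : i ≤ N) :
    extPath (N + 1) (Fin.snoc γ v) i = extPath N γ i := by
  rw [extPath_eq_of_le _ (le_trans h (Nat.le_succ N)), extPath_eq_of_le γ h]
  have hcast : (⟨i, Nat.lt_succ_of_le (le_trans h (Nat.le_succ N))⟩ : Fin (N + 2))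
      = Fin.castSucc ⟨i, Nat.lt_succ_of_le h⟩ := rfl
  rw [hcast, Fin.snoc_castSucc]

lemma extPath_snoc_top {N : ℕ} (γ : Fin (N + 1) → V) (v : V) :
    extPath (N + 1) (Fin.snoc γ v) (N + 1) = v := by
  rw [extPath_eq_of_le _ (le_refl (N + 1))]
  have hcast : (⟨N + 1, Nat.lt_succ_of_le (le_refl (N + 1))⟩ : Fin (N + 2))
      = Fin.last (N + 1) := rfl
  rw [hcast, Fin.snoc_last]

lemma pathWeight_nonneg {N : ℕ} (γ : Fin (N + 1) → V) : 0 ≤ pathWeight G N γ :=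
  Finset.prod_nonneg fun i _ => lazyStep_nonneg G _ _

lemma pathWeight_snoc {N : ℕ} (γ : Fin (N + 1) → V) (v : V) :
    pathWeight G (N + 1) (Fin.snoc γ v)
      = pathWeight G N γ * lazyStep G (extPath N γ N) v := by
  unfold pathWeight
  rw [Finset.prod_range_succ]
  congr 1
  · refine Finset.prod_congr rfl fun i hi => ?_
    rw [Finset.mem_range] at hi
    rw [extPath_snoc_of_le _ _ (by omega), extPath_snoc_of_le _ _ (by omega)]
  · rw [extPath_snoc_of_le _ _ (le_refl N), extPath_snoc_top]

lemma sum_snoc {N : ℕ} (f : (Fin (N + 2) → V) → ℝ) :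
    ∑ γ : Fin (N + 2) → V, f γ = ∑ γ : Fin (N + 1) → V, ∑ v : V, f (Fin.snoc γ v) := by
  rw [← Equiv.sum_comp (Fin.snocEquiv (fun _ => V)) f, Fintype.sum_prod_type,
    Finset.sum_comm]
  rfl

/-- `E` depends only on the values of the walk at times `≤ M`. -/
def Supp (M : ℕ) (E : (ℕ → V) → Prop) : Prop :=
  ∀ w w' : ℕ → V, (∀ i, i ≤ M → w i = w' i) → (E w ↔ E w')

lemma Supp.mono {M M' : ℕ} {E : (ℕ → V) → Prop} (h : Supp M E) (hMM' : M ≤ M') :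
    Supp M' E :=
  fun w w' hag => h w w' fun i hi => hag i (le_trans hi hMM')

end Aux

open Classical in
/-- Indicator helper with a fixed (classical) decidability instance. -/
noncomputable def ind (P : Prop) (x : ℝ) : ℝ := if P then x else 0

lemma ind_pos {P : Prop} (h : P) (x : ℝ) : ind P x = x := if_pos h

lemma ind_neg {P : Prop} (h : ¬ P) (x : ℝ) : ind P x = 0 := if_neg h

lemma ind_congr {P Q : Prop} (h : P ↔ Q) (x : ℝ) : ind P x = ind Q x := by
  by_cases hP : P
  · rw [ind_pos hP, ind_pos (h.mp hP)]
  · rw [ind_neg hP, ind_neg (fun hq => hP (h.mpr hq))]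

lemma ind_nonneg {P : Prop} {x : ℝ} (hx : 0 ≤ x) : 0 ≤ ind P x := by
  by_cases hP : P
  · rw [ind_pos hP]; exact hx
  · rw [ind_neg hP]

lemma ind_mul (P : Prop) (x y : ℝ) : ind P x * y = ind P (x * y) := by
  by_cases hP : P
  · rw [ind_pos hP, ind_pos hP]
  · rw [ind_neg hP, ind_neg hP, zero_mul]

lemma ind_mono {P Q : Prop} (h : P → Q) {x y : ℝ} (hxy : x ≤ y) (hy : 0 ≤ y) :
    ind P x ≤ ind Q y := by
  by_cases hP : P
  · rw [ind_pos hP, ind_pos (h hP)]; exact hxy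
  · rw [ind_neg hP]; exact ind_nonneg hy

section Aux2

variable (G : SimpleGraph V) [DecidableRel G.Adj]

lemma walkProb_eq (ρ : V) (N : ℕ) (E : (ℕ → V) → Prop) :
    walkProb G ρ N E
      = ∑ γ : Fin (N + 1) → V,
          ind (extPath N γ 0 = ρ ∧ E (extPath N γ)) (pathWeight G N γ) := by
  unfold walkProb ind
  refine Finset.sum_congr rfl fun γ _ => ?_
  by_cases h : extPath N γ 0 = ρ ∧ E (extPath N γ)
  · rw [if_pos h, if_pos h]
  · rw [if_neg h, if_neg h]

lemma walkProb_congr {ρ : V} {N : ℕ} {E E' : (ℕ → V) → Prop}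
    (h : ∀ w, E w ↔ E' w) : walkProb G ρ N E = walkProb G ρ N E' := by
  rw [walkProb_eq, walkProb_eq]
  exact Finset.sum_congr rfl fun γ _ =>
    ind_congr (and_congr_right fun _ => h _) _

lemma walkProb_nonneg (ρ : V) (N : ℕ) (E : (ℕ → V) → Prop) :
    0 ≤ walkProb G ρ N E := by
  rw [walkProb_eq]
  exact Finset.sum_nonneg fun γ _ => ind_nonneg (pathWeight_nonneg G γ)

lemma walkProb_false (ρ : V) (N : ℕ) : walkProb G ρ N (fun _ => False) = 0 := by
  rw [walkProb_eq]
  refine Finset.sum_eq_zero fun γ _ => ind_neg (fun h => h.2) _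

lemma walkProb_root (ρ : V) (N : ℕ) (E : (ℕ → V) → Prop) :
    walkProb G ρ N E = walkProb G ρ N (fun w => w 0 = ρ ∧ E w) := by
  rw [walkProb_eq, walkProb_eq]
  exact Finset.sum_congr rfl fun γ _ => ind_congr (by tauto) _

lemma walkProb_drop_one (hdeg : ∀ x, 0 < G.degree x) {ρ : V} {N : ℕ}
    {E : (ℕ → V) → Prop} (hE : Supp N E) :
    walkProb G ρ (N + 1) E = walkProb G ρ N E := by
  rw [walkProb_eq, walkProb_eq, sum_snoc]
  refine Finset.sum_congr rfl fun γ _ => ?_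
  have hcond : ∀ v : V,
      (extPath (N + 1) (Fin.snoc γ v) 0 = ρ ∧ E (extPath (N + 1) (Fin.snoc γ v)))
        ↔ (extPath N γ 0 = ρ ∧ E (extPath N γ)) := by
    intro v
    rw [extPath_snoc_of_le γ v (Nat.zero_le N)]
    exact and_congr_right fun _ => hE _ _ fun i hi => extPath_snoc_of_le γ v hi
  calc ∑ v : V, ind (extPath (N + 1) (Fin.snoc γ v) 0 = ρ ∧ E (extPath (N + 1) (Fin.snoc γ v)))
          (pathWeight G (N + 1) (Fin.snoc γ v))
      = ∑ v : V, ind (extPath N γ 0 = ρ ∧ E (extPath N γ))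
          (pathWeight G N γ * lazyStep G (extPath N γ N) v) := by
        refine Finset.sum_congr rfl fun v _ => ?_
        rw [ind_congr (hcond v), pathWeight_snoc]
    _ = ind (extPath N γ 0 = ρ ∧ E (extPath N γ)) (pathWeight G N γ) := by
        by_cases h : extPath N γ 0 = ρ ∧ E (extPath N γ)
        · simp only [ind_pos h]
          rw [← Finset.mul_sum, lazyStep_sum G hdeg, mul_one]
        · simp only [ind_neg h, Finset.sum_const_zero]

lemma walkProb_drop (hdeg : ∀ x, 0 < G.degree x) {ρ : V} {M N : ℕ}
    {E : (ℕ → V) → Prop} (hE : Supp M E) (h : M ≤ N) :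
    walkProb G ρ N E = walkProb G ρ M E := by
  induction N, h using Nat.le_induction with
  | base => rfl
  | succ N hMN ih => rw [walkProb_drop_one G hdeg (hE.mono hMN), ih]

lemma sum_ind_pin (P : Prop) (c : V) (A : ℝ) (B : V → ℝ) :
    ∑ z : V, ind (P ∧ c = z) A * B z = ind P (A * B c) := by
  have h : ∀ z : V, ind (P ∧ c = z) A * B z
      = if c = z then ind P (A * B z) else 0 := by
    intro z
    by_cases hz : c = z
    · rw [if_pos hz, ind_mul]
      exact congrArg (fun Q => ind Q (A * B z)) (by tauto) ▸
        ind_congr (by tauto) (A * B z)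
    · rw [if_neg hz, ind_neg (fun h' => hz h'.2), zero_mul]
  simp_rw [h]
  rw [Finset.sum_ite_eq]
  simp

lemma sum_ind_pin2 (P : Prop) (v : V) (D : V → ℝ) :
    ∑ u : V, ind (P ∧ u = v) (D u) = ind P (D v) := by
  have h : ∀ u : V, ind (P ∧ u = v) (D u)
      = if v = u then ind P (D u) else 0 := by
    intro u
    by_cases hu : u = v
    · subst hu
      rw [if_pos rfl]
      exact ind_congr (by tauto) _
    · rw [if_neg (fun h' => hu h'.symm), ind_neg (fun h' => hu h'.2)]
  simp_rw [h]
  rw [Finset.sum_ite_eq]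
  simp

lemma walkProb_step (hdeg : ∀ x, 0 < G.degree x) {ρ : V} {N : ℕ}
    {E : (ℕ → V) → Prop} (hE : Supp N E) (v : V) :
    walkProb G ρ (N + 1) (fun w => E w ∧ w (N + 1) = v)
      = ∑ z : V, walkProb G ρ N (fun w => E w ∧ w N = z) * lazyStep G z v := by
  simp_rw [walkProb_eq]
  rw [sum_snoc]
  have hRHS : ∀ z : V,
      (∑ γ : Fin (N + 1) → V,
          ind (extPath N γ 0 = ρ ∧ E (extPath N γ) ∧ extPath N γ N = z)
            (pathWeight G N γ)) * lazyStep G z v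
        = ∑ γ : Fin (N + 1) → V,
            ind ((extPath N γ 0 = ρ ∧ E (extPath N γ)) ∧ extPath N γ N = z)
              (pathWeight G N γ) * lazyStep G z v := by
    intro z
    rw [Finset.sum_mul]
    exact Finset.sum_congr rfl fun γ _ => by rw [ind_congr (by tauto :
      (extPath N γ 0 = ρ ∧ E (extPath N γ) ∧ extPath N γ N = z)
        ↔ ((extPath N γ 0 = ρ ∧ E (extPath N γ)) ∧ extPath N γ N = z))]
  simp_rw [hRHS]
  conv_rhs => rw [Finset.sum_comm]
  refine Finset.sum_congr rfl fun γ _ => ?_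
  have hLHS : ∀ u : V,
      ind (extPath (N + 1) (Fin.snoc γ u) 0 = ρ ∧ E (extPath (N + 1) (Fin.snoc γ u))
          ∧ extPath (N + 1) (Fin.snoc γ u) (N + 1) = v)
        (pathWeight G (N + 1) (Fin.snoc γ u))
      = ind ((extPath N γ 0 = ρ ∧ E (extPath N γ)) ∧ u = v)
          (pathWeight G N γ * lazyStep G (extPath N γ N) u) := by
    intro u
    rw [pathWeight_snoc]
    refine ind_congr ?_ _
    rw [extPath_snoc_of_le γ u (Nat.zero_le N), extPath_snoc_top]
    have hEiff : E (extPath (N + 1) (Fin.snoc γ u)) ↔ E (extPath N γ) :=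
      hE _ _ fun i hi => extPath_snoc_of_le γ u hi
    rw [hEiff]
    tauto
  simp_rw [hLHS]
  rw [sum_ind_pin2 (extPath N γ 0 = ρ ∧ E (extPath N γ)) v
    (fun u => pathWeight G N γ * lazyStep G (extPath N γ N) u)]
  rw [sum_ind_pin (extPath N γ 0 = ρ ∧ E (extPath N γ)) (extPath N γ N)
    (pathWeight G N γ) (fun z => lazyStep G z v)]

lemma walkProb_peel (hdeg : ∀ x, 0 < G.degree x) {ρ : V} {t : ℕ}
    {E : (ℕ → V) → Prop} {u : V} (hE : Supp t E) (hpin : ∀ w, E w → w t = u)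
    (n : ℕ) (v : V) :
    walkProb G ρ (t + n) (fun w => E w ∧ w (t + n) = v)
      = walkProb G ρ t E * lazyProb G n u v := by
  induction n generalizing v with
  | zero =>
    rw [Nat.add_zero]
    by_cases hv : u = v
    · subst hv
      have h1 : walkProb G ρ t (fun w => E w ∧ w t = u) = walkProb G ρ t E :=
        walkProb_congr G fun w => ⟨fun h => h.1, fun h => ⟨h, hpin w h⟩⟩
      rw [h1]
      unfold lazyProb
      simp
    · have h1 : walkProb G ρ t (fun w => E w ∧ w t = v) = walkProb G ρ t (fun _ => False) :=
        walkProb_congr G fun w =>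
          ⟨fun h => hv (by rw [← hpin w h.1, h.2]), False.elim⟩
      rw [h1, walkProb_false]
      unfold lazyProb
      simp [hv]
  | succ n ih =>
    rw [show t + (n + 1) = (t + n) + 1 from rfl]
    rw [walkProb_step G hdeg (hE.mono (Nat.le_add_right t n)) v]
    have hstep : ∀ z, walkProb G ρ (t + n) (fun w => E w ∧ w (t + n) = z)
        = walkProb G ρ t E * lazyProb G n u z := fun z => ih z
    simp_rw [hstep]
    have hlp : lazyProb G (n + 1) u v = ∑ z : V, lazyProb G n u z * lazyStep G z v := by
      rw [lazyProb_add G n 1]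
      exact Finset.sum_congr rfl fun z _ => by rw [lazyProb_one]
    rw [hlp, Finset.mul_sum]
    exact Finset.sum_congr rfl fun z _ => by ring

lemma walkProb_peel' (hdeg : ∀ x, 0 < G.degree x) {ρ : V} {t s : ℕ}
    {E : (ℕ → V) → Prop} {u : V} (hE : Supp t E) (hpin : ∀ w, E w → w t = u)
    (hts : t ≤ s) (v : V) :
    walkProb G ρ s (fun w => E w ∧ w s = v)
      = walkProb G ρ t E * lazyProb G (s - t) u v := by
  obtain ⟨n, rfl⟩ : ∃ n, s = t + n := ⟨s - t, (Nat.add_sub_cancel' hts).symm⟩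
  rw [Nat.add_sub_cancel_left]
  exact walkProb_peel G hdeg hE hpin n v

lemma walkProb_zero_root (ρ : V) : walkProb G ρ 0 (fun w => w 0 = ρ) = 1 := by
  rw [walkProb_eq]
  have hpw : ∀ γ : Fin 1 → V, pathWeight G 0 γ = 1 := by
    intro γ; unfold pathWeight; simp
  have hc : ∀ γ : Fin 1 → V,
      ind (extPath 0 γ 0 = ρ ∧ extPath 0 γ 0 = ρ) (pathWeight G 0 γ)
        = if γ 0 = ρ then 1 else 0 := by
    intro γ
    have hext : extPath 0 γ 0 = γ 0 := by
      rw [extPath_eq_of_le γ (le_refl 0)]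
      exact congrArg γ (Fin.ext (by simp))
    by_cases h : γ 0 = ρ
    · rw [if_pos h, hpw, ind_pos ⟨hext.trans h, hext.trans h⟩]
    · rw [if_neg h, ind_neg (fun h' => h (hext.symm.trans h'.1))]
  calc ∑ γ : Fin 1 → V, ind (extPath 0 γ 0 = ρ ∧ extPath 0 γ 0 = ρ) (pathWeight G 0 γ)
      = ∑ γ : Fin 1 → V, if γ 0 = ρ then (1:ℝ) else 0 :=
        Finset.sum_congr rfl fun γ _ => hc γ
    _ = 1 := by
        rw [← Equiv.sum_comp (Equiv.funUnique (Fin 1) V).symm]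
        simp

lemma walkProb_fourpoint (hdeg : ∀ x, 0 < G.degree x) (ρ : V) {t₁ t₂ t₃ t₄ N : ℕ}
    (h12 : t₁ ≤ t₂) (h23 : t₂ ≤ t₃) (h34 : t₃ ≤ t₄) (h4N : t₄ ≤ N) (v₁ v₂ v₃ v₄ : V) :
    walkProb G ρ N (fun w => w t₁ = v₁ ∧ w t₂ = v₂ ∧ w t₃ = v₃ ∧ w t₄ = v₄)
      = lazyProb G t₁ ρ v₁ * lazyProb G (t₂ - t₁) v₁ v₂ * lazyProb G (t₃ - t₂) v₂ v₃
        * lazyProb G (t₄ - t₃) v₃ v₄ := by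
  have hS4 : Supp t₄ (fun w : ℕ → V => w t₁ = v₁ ∧ w t₂ = v₂ ∧ w t₃ = v₃ ∧ w t₄ = v₄) := by
    intro w w' hag
    dsimp only
    rw [hag t₁ (by omega), hag t₂ (by omega), hag t₃ (by omega), hag t₄ le_rfl]
  rw [walkProb_drop G hdeg hS4 h4N]
  have e0 : walkProb G ρ t₄ (fun w => w t₁ = v₁ ∧ w t₂ = v₂ ∧ w t₃ = v₃ ∧ w t₄ = v₄)
      = walkProb G ρ t₄
        (fun w => (w 0 = ρ ∧ w t₁ = v₁ ∧ w t₂ = v₂ ∧ w t₃ = v₃) ∧ w t₄ = v₄) := by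
    rw [walkProb_root]
    exact walkProb_congr G fun w => by tauto
  rw [e0]
  have hE3 : Supp t₃ (fun w : ℕ → V => w 0 = ρ ∧ w t₁ = v₁ ∧ w t₂ = v₂ ∧ w t₃ = v₃) := by
    intro w w' hag
    dsimp only
    rw [hag 0 (by omega), hag t₁ (by omega), hag t₂ (by omega), hag t₃ le_rfl]
  rw [walkProb_peel' G hdeg hE3 (fun w h => h.2.2.2) h34 v₄]
  have hc2 : walkProb G ρ t₃ (fun w => w 0 = ρ ∧ w t₁ = v₁ ∧ w t₂ = v₂ ∧ w t₃ = v₃)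
      = walkProb G ρ t₃ (fun w => (w 0 = ρ ∧ w t₁ = v₁ ∧ w t₂ = v₂) ∧ w t₃ = v₃) :=
    walkProb_congr G fun w => by tauto
  rw [hc2]
  have hE2 : Supp t₂ (fun w : ℕ → V => w 0 = ρ ∧ w t₁ = v₁ ∧ w t₂ = v₂) := by
    intro w w' hag
    dsimp only
    rw [hag 0 (by omega), hag t₁ (by omega), hag t₂ le_rfl]
  rw [walkProb_peel' G hdeg hE2 (fun w h => h.2.2) h23 v₃]
  have hc3 : walkProb G ρ t₂ (fun w => w 0 = ρ ∧ w t₁ = v₁ ∧ w t₂ = v₂)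
      = walkProb G ρ t₂ (fun w => (w 0 = ρ ∧ w t₁ = v₁) ∧ w t₂ = v₂) :=
    walkProb_congr G fun w => by tauto
  rw [hc3]
  have hE1 : Supp t₁ (fun w : ℕ → V => w 0 = ρ ∧ w t₁ = v₁) := by
    intro w w' hag
    dsimp only
    rw [hag 0 (by omega), hag t₁ le_rfl]
  rw [walkProb_peel' G hdeg hE1 (fun w h => h.2) h12 v₂]
  have hc4 : walkProb G ρ t₁ (fun w => w 0 = ρ ∧ w t₁ = v₁)
      = walkProb G ρ t₁ (fun w => (w 0 = ρ) ∧ w t₁ = v₁) :=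
    walkProb_congr G fun w => Iff.rfl
  rw [hc4]
  have hE0 : Supp 0 (fun w : ℕ → V => w 0 = ρ) := by
    intro w w' hag
    dsimp only
    rw [hag 0 le_rfl]
  rw [walkProb_peel' G hdeg hE0 (fun w h => h) (Nat.zero_le t₁) v₁]
  rw [walkProb_zero_root, Nat.sub_zero]
  ring

lemma walkProb_union_le {ι : Type*} (ρ : V) (N : ℕ) (S : Finset ι)
    (E : (ℕ → V) → Prop) (F : ι → (ℕ → V) → Prop)
    (h : ∀ w, E w → ∃ i ∈ S, F i w) :
    walkProb G ρ N E ≤ ∑ i ∈ S, walkProb G ρ N (F i) := by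
  simp_rw [walkProb_eq]
  rw [Finset.sum_comm]
  refine Finset.sum_le_sum fun γ _ => ?_
  by_cases hc : extPath N γ 0 = ρ ∧ E (extPath N γ)
  · obtain ⟨i, hiS, hFi⟩ := h _ hc.2
    rw [ind_pos hc]
    calc pathWeight G N γ
        = ind (extPath N γ 0 = ρ ∧ F i (extPath N γ)) (pathWeight G N γ) :=
          (ind_pos ⟨hc.1, hFi⟩ _).symm
      _ ≤ ∑ j ∈ S, ind (extPath N γ 0 = ρ ∧ F j (extPath N γ)) (pathWeight G N γ) :=
          Finset.single_le_sum
            (f := fun j => ind (extPath N γ 0 = ρ ∧ F j (extPath N γ)) (pathWeight G N γ))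
            (fun j _ => ind_nonneg (pathWeight_nonneg G γ)) hiS
  · rw [ind_neg hc]
    exact Finset.sum_nonneg fun j _ => ind_nonneg (pathWeight_nonneg G γ)

lemma sum_ind_pin3 (P : Prop) (c : V) (A : ℝ) :
    ∑ z : V, ind (P ∧ c = z) A = ind P A := by
  have h : ∀ z : V, ind (P ∧ c = z) A = if c = z then ind P A else 0 := by
    intro z
    by_cases hz : c = z
    · rw [if_pos hz]
      exact ind_congr (by tauto) _
    · rw [if_neg hz, ind_neg (fun h' => hz h'.2)]
  simp_rw [h]
  rw [Finset.sum_ite_eq]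
  simp

lemma walkProb_pair_decomp (ρ : V) (N : ℕ) (i i' j k : ℕ) :
    walkProb G ρ N (fun w => w i = w j ∧ w i' = w k)
      = ∑ x : V, ∑ y : V,
          walkProb G ρ N (fun w => w i = x ∧ w i' = y ∧ w j = x ∧ w k = y) := by
  simp_rw [walkProb_eq]
  have hpt : ∀ γ : Fin (N + 1) → V,
      ind (extPath N γ 0 = ρ ∧ extPath N γ i = extPath N γ j
            ∧ extPath N γ i' = extPath N γ k) (pathWeight G N γ)
        = ∑ x : V, ∑ y : V,
            ind (extPath N γ 0 = ρ ∧ extPath N γ i = x ∧ extPath N γ i' = y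
              ∧ extPath N γ j = x ∧ extPath N γ k = y) (pathWeight G N γ) := by
    intro γ
    set w := extPath N γ with hw
    have h1 : ∀ x : V, ∑ y : V,
        ind (w 0 = ρ ∧ w i = x ∧ w i' = y ∧ w j = x ∧ w k = y) (pathWeight G N γ)
          = ind (w 0 = ρ ∧ w i = x ∧ w j = x ∧ w k = w i') (pathWeight G N γ) := by
      intro x
      have hcong : ∀ y : V,
          (w 0 = ρ ∧ w i = x ∧ w i' = y ∧ w j = x ∧ w k = y)
            ↔ ((w 0 = ρ ∧ w i = x ∧ w j = x ∧ w k = w i') ∧ w i' = y) := by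
        intro y
        constructor
        · rintro ⟨h0, h1, h2, h3, h4⟩
          exact ⟨⟨h0, h1, h3, h4.trans h2.symm⟩, h2⟩
        · rintro ⟨⟨h0, h1, h3, hk⟩, h2⟩
          exact ⟨h0, h1, h2, h3, hk.trans h2⟩
      calc ∑ y : V, ind (w 0 = ρ ∧ w i = x ∧ w i' = y ∧ w j = x ∧ w k = y) (pathWeight G N γ)
          = ∑ y : V, ind ((w 0 = ρ ∧ w i = x ∧ w j = x ∧ w k = w i') ∧ w i' = y)
              (pathWeight G N γ) :=
            Finset.sum_congr rfl fun y _ => ind_congr (hcong y) _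
        _ = ind (w 0 = ρ ∧ w i = x ∧ w j = x ∧ w k = w i') (pathWeight G N γ) :=
            sum_ind_pin3 _ _ _
    have h2 : ∑ x : V, ind (w 0 = ρ ∧ w i = x ∧ w j = x ∧ w k = w i') (pathWeight G N γ)
        = ind (w 0 = ρ ∧ w i = w j ∧ w i' = w k) (pathWeight G N γ) := by
      have hcong : ∀ x : V,
          (w 0 = ρ ∧ w i = x ∧ w j = x ∧ w k = w i')
            ↔ ((w 0 = ρ ∧ w i = w j ∧ w i' = w k) ∧ w i = x) := by
        intro x
        constructor
        · rintro ⟨h0, h1, h3, hk⟩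
          exact ⟨⟨h0, h1.trans h3.symm, hk.symm⟩, h1⟩
        · rintro ⟨⟨h0, hij, hik⟩, h1⟩
          exact ⟨h0, h1, (hij.symm.trans h1), hik.symm⟩
      calc ∑ x : V, ind (w 0 = ρ ∧ w i = x ∧ w j = x ∧ w k = w i') (pathWeight G N γ)
          = ∑ x : V, ind ((w 0 = ρ ∧ w i = w j ∧ w i' = w k) ∧ w i = x) (pathWeight G N γ) :=
            Finset.sum_congr rfl fun x _ => ind_congr (hcong x) _
        _ = ind (w 0 = ρ ∧ w i = w j ∧ w i' = w k) (pathWeight G N γ) := sum_ind_pin3 _ _ _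
    rw [Finset.sum_congr rfl fun x _ => h1 x, h2]
  calc ∑ γ : Fin (N + 1) → V,
        ind (extPath N γ 0 = ρ ∧ extPath N γ i = extPath N γ j
          ∧ extPath N γ i' = extPath N γ k) (pathWeight G N γ)
      = ∑ γ : Fin (N + 1) → V, ∑ x : V, ∑ y : V,
          ind (extPath N γ 0 = ρ ∧ extPath N γ i = x ∧ extPath N γ i' = y
            ∧ extPath N γ j = x ∧ extPath N γ k = y) (pathWeight G N γ) :=
        Finset.sum_congr rfl fun γ _ => hpt γ
    _ = ∑ x : V, ∑ γ : Fin (N + 1) → V, ∑ y : V,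
          ind (extPath N γ 0 = ρ ∧ extPath N γ i = x ∧ extPath N γ i' = y
            ∧ extPath N γ j = x ∧ extPath N γ k = y) (pathWeight G N γ) := Finset.sum_comm
    _ = ∑ x : V, ∑ y : V, ∑ γ : Fin (N + 1) → V,
          ind (extPath N γ 0 = ρ ∧ extPath N γ i = x ∧ extPath N γ i' = y
            ∧ extPath N γ j = x ∧ extPath N γ k = y) (pathWeight G N γ) :=
        Finset.sum_congr rfl fun x _ => Finset.sum_comm

lemma quad_bound (hconn : G.Connected) {d : ℕ} (hreg : G.IsRegularOfDegree d)
    (hdeg : ∀ x, 0 < G.degree x) (ρ : V) {N s i i' j k b₁ : ℕ}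
    (hs : tmix G + 1 ≤ s)
    (hib : i ≤ b₁) (hi'b : i' ≤ b₁) (hj : b₁ + s ≤ j) (hk : j + s ≤ k) (hkN : k ≤ N) :
    walkProb G ρ N (fun w => w i = w j ∧ w i' = w k)
      ≤ 2 / ((Fintype.card V : ℝ)) ^ 2 := by
  have hN : (0:ℝ) < (Fintype.card V : ℝ) := by exact_mod_cast Fintype.card_pos
  set B : ℝ := 5 / (4 * (Fintype.card V : ℝ)) with hB
  have hB0 : 0 ≤ B := by positivity
  have hmix : ∀ {m : ℕ}, tmix G ≤ m → ∀ x y : V, lazyProb G m x y ≤ B :=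
    fun {m} hm x y => lazyProb_mix_le G hconn hreg hdeg hm x y
  have hBB : B * B ≤ 2 / ((Fintype.card V : ℝ)) ^ 2 := by
    rw [hB, div_mul_div_comm, div_le_div_iff₀ (by positivity) (by positivity)]
    nlinarith [sq_nonneg (Fintype.card V : ℝ), hN]
  rw [walkProb_pair_decomp]
  rcases le_or_gt i i' with hii' | hii'
  · -- ordered times i ≤ i' ≤ j ≤ k
    have hfp : ∀ x y : V,
        walkProb G ρ N (fun w => w i = x ∧ w i' = y ∧ w j = x ∧ w k = y)
          = lazyProb G i ρ x * lazyProb G (i' - i) x y * lazyProb G (j - i') y x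
            * lazyProb G (k - j) x y := by
      intro x y
      exact walkProb_fourpoint G hdeg ρ hii' (by omega) (by omega) hkN x y x y
    calc ∑ x : V, ∑ y : V, walkProb G ρ N (fun w => w i = x ∧ w i' = y ∧ w j = x ∧ w k = y)
        = ∑ x : V, ∑ y : V, lazyProb G i ρ x * lazyProb G (i' - i) x y
            * lazyProb G (j - i') y x * lazyProb G (k - j) x y :=
          Finset.sum_congr rfl fun x _ => Finset.sum_congr rfl fun y _ => hfp x y
      _ ≤ ∑ x : V, ∑ y : V, lazyProb G i ρ x * lazyProb G (i' - i) x y * (B * B) := by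
          refine Finset.sum_le_sum fun x _ => Finset.sum_le_sum fun y _ => ?_
          have h3 : lazyProb G (j - i') y x ≤ B := hmix (by omega) y x
          have h4 : lazyProb G (k - j) x y ≤ B := hmix (by omega) x y
          have h34 : lazyProb G (j - i') y x * lazyProb G (k - j) x y ≤ B * B :=
            mul_le_mul h3 h4 (lazyProb_nonneg G _ _ _) hB0
          have h12 : 0 ≤ lazyProb G i ρ x * lazyProb G (i' - i) x y :=
            mul_nonneg (lazyProb_nonneg G _ _ _) (lazyProb_nonneg G _ _ _)
          calc lazyProb G i ρ x * lazyProb G (i' - i) x y * lazyProb G (j - i') y x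
                * lazyProb G (k - j) x y
              = (lazyProb G i ρ x * lazyProb G (i' - i) x y)
                * (lazyProb G (j - i') y x * lazyProb G (k - j) x y) := by ring
            _ ≤ (lazyProb G i ρ x * lazyProb G (i' - i) x y) * (B * B) :=
                mul_le_mul_of_nonneg_left h34 h12
      _ = B * B := by
          have hx : ∀ x : V, ∑ y : V, lazyProb G i ρ x * lazyProb G (i' - i) x y * (B * B)
              = lazyProb G i ρ x * (B * B) := by
            intro x
            have : ∀ y : V, lazyProb G i ρ x * lazyProb G (i' - i) x y * (B * B)
                = (lazyProb G i ρ x * (B * B)) * lazyProb G (i' - i) x y := fun y => by ring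
            simp_rw [this]
            rw [← Finset.mul_sum, lazyProb_sum G hdeg, mul_one]
          simp_rw [hx]
          rw [← Finset.sum_mul, lazyProb_sum G hdeg, one_mul]
      _ ≤ 2 / ((Fintype.card V : ℝ)) ^ 2 := hBB
  · -- ordered times i' < i ≤ j ≤ k
    have hfp : ∀ x y : V,
        walkProb G ρ N (fun w => w i = x ∧ w i' = y ∧ w j = x ∧ w k = y)
          = lazyProb G i' ρ y * lazyProb G (i - i') y x * lazyProb G (j - i) x x
            * lazyProb G (k - j) x y := by
      intro x y
      have hcong : walkProb G ρ N (fun w => w i = x ∧ w i' = y ∧ w j = x ∧ w k = y)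
          = walkProb G ρ N (fun w => w i' = y ∧ w i = x ∧ w j = x ∧ w k = y) :=
        walkProb_congr G fun w => by tauto
      rw [hcong]
      exact walkProb_fourpoint G hdeg ρ (by omega) (by omega) (by omega) hkN y x x y
    calc ∑ x : V, ∑ y : V, walkProb G ρ N (fun w => w i = x ∧ w i' = y ∧ w j = x ∧ w k = y)
        = ∑ x : V, ∑ y : V, lazyProb G i' ρ y * lazyProb G (i - i') y x
            * lazyProb G (j - i) x x * lazyProb G (k - j) x y :=
          Finset.sum_congr rfl fun x _ => Finset.sum_congr rfl fun y _ => hfp x y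
      _ ≤ ∑ x : V, ∑ y : V, lazyProb G i' ρ y * lazyProb G (i - i') y x * (B * B) := by
          refine Finset.sum_le_sum fun x _ => Finset.sum_le_sum fun y _ => ?_
          have h3 : lazyProb G (j - i) x x ≤ B := hmix (by omega) x x
          have h4 : lazyProb G (k - j) x y ≤ B := hmix (by omega) x y
          have h34 : lazyProb G (j - i) x x * lazyProb G (k - j) x y ≤ B * B :=
            mul_le_mul h3 h4 (lazyProb_nonneg G _ _ _) hB0
          have h12 : 0 ≤ lazyProb G i' ρ y * lazyProb G (i - i') y x :=
            mul_nonneg (lazyProb_nonneg G _ _ _) (lazyProb_nonneg G _ _ _)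
          calc lazyProb G i' ρ y * lazyProb G (i - i') y x * lazyProb G (j - i) x x
                * lazyProb G (k - j) x y
              = (lazyProb G i' ρ y * lazyProb G (i - i') y x)
                * (lazyProb G (j - i) x x * lazyProb G (k - j) x y) := by ring
            _ ≤ (lazyProb G i' ρ y * lazyProb G (i - i') y x) * (B * B) :=
                mul_le_mul_of_nonneg_left h34 h12
      _ = B * B := by
          rw [Finset.sum_comm]
          have hy : ∀ y : V, ∑ x : V, lazyProb G i' ρ y * lazyProb G (i - i') y x * (B * B)
              = lazyProb G i' ρ y * (B * B) := by
            intro y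
            have : ∀ x : V, lazyProb G i' ρ y * lazyProb G (i - i') y x * (B * B)
                = (lazyProb G i' ρ y * (B * B)) * lazyProb G (i - i') y x := fun x => by ring
            simp_rw [this]
            rw [← Finset.mul_sum, lazyProb_sum G hdeg, mul_one]
          simp_rw [hy]
          rw [← Finset.sum_mul, lazyProb_sum G hdeg, one_mul]
      _ ≤ 2 / ((Fintype.card V : ℝ)) ^ 2 := hBB

end Aux2

section Aux

variable (G : SimpleGraph V) [DecidableRel G.Adj]

end Aux

/-- Range self-intersection probability, three intervals. -/
theorem range_self_intersection_three_intervals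
    (G : SimpleGraph V) [DecidableRel G.Adj] (hconn : G.Connected)
    (hcard : 2 ≤ Fintype.card V) (d : ℕ) (hreg : G.IsRegularOfDegree d)
    (s : ℕ) (hs : tmix G + 1 ≤ s)
    (a₁ b₁ a₂ b₂ a₃ b₃ : ℕ) (h₁ : a₁ ≤ b₁) (h₂ : a₂ ≤ b₂) (h₃ : a₃ ≤ b₃)
    (ha₁ : s ≤ a₁) (hsep₁ : b₁ + s ≤ a₂) (hsep₂ : b₂ + s ≤ a₃) (ρ : V) :
    walkProb G ρ b₃ (fun w =>
        (walkRange w (Finset.Icc a₁ b₁) ∩ walkRange w (Finset.Icc a₂ b₂)).Nonempty ∧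
        (walkRange w (Finset.Icc a₁ b₁) ∩ walkRange w (Finset.Icc a₃ b₃)).Nonempty) ≤
      8 * ((Finset.Icc a₁ b₁).card : ℝ) ^ 2 * ((Finset.Icc a₂ b₂).card : ℝ) *
        ((Finset.Icc a₃ b₃).card : ℝ) / ((Fintype.card V : ℝ)) ^ 2 := by
  classical
  have hdeg : ∀ x, 0 < G.degree x := degree_pos G hconn hcard
  have hN : (0:ℝ) < (Fintype.card V : ℝ) := by exact_mod_cast Fintype.card_pos
  set S : Finset ((ℕ × ℕ) × ℕ × ℕ) :=
    (Finset.Icc a₁ b₁ ×ˢ Finset.Icc a₁ b₁) ×ˢ (Finset.Icc a₂ b₂ ×ˢ Finset.Icc a₃ b₃) with hS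
  have hunion : walkProb G ρ b₃ (fun w =>
        (walkRange w (Finset.Icc a₁ b₁) ∩ walkRange w (Finset.Icc a₂ b₂)).Nonempty ∧
        (walkRange w (Finset.Icc a₁ b₁) ∩ walkRange w (Finset.Icc a₃ b₃)).Nonempty)
      ≤ ∑ q ∈ S, walkProb G ρ b₃
          (fun w => w q.1.1 = w q.2.1 ∧ w q.1.2 = w q.2.2) := by
    refine walkProb_union_le G ρ b₃ S _ _ ?_
    rintro w ⟨⟨v₂, hv₂⟩, ⟨v₃, hv₃⟩⟩
    rw [Finset.mem_inter] at hv₂ hv₃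
    obtain ⟨i, hi, hwi⟩ := Finset.mem_image.mp hv₂.1
    obtain ⟨j, hj, hwj⟩ := Finset.mem_image.mp hv₂.2
    obtain ⟨i', hi', hwi'⟩ := Finset.mem_image.mp hv₃.1
    obtain ⟨k, hk, hwk⟩ := Finset.mem_image.mp hv₃.2
    refine ⟨((i, i'), (j, k)), ?_, ?_⟩
    · simp only [hS, Finset.mem_product]
      exact ⟨⟨hi, hi'⟩, hj, hk⟩
    · exact ⟨hwi.trans hwj.symm, hwi'.trans hwk.symm⟩
  have hquad : ∀ q ∈ S, walkProb G ρ b₃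
        (fun w => w q.1.1 = w q.2.1 ∧ w q.1.2 = w q.2.2)
      ≤ 2 / ((Fintype.card V : ℝ)) ^ 2 := by
    intro q hq
    simp only [hS, Finset.mem_product, Finset.mem_Icc] at hq
    obtain ⟨⟨⟨hia, hib⟩, hi'a, hi'b⟩, ⟨hja, hjb⟩, hka, hkb⟩ := hq
    exact quad_bound G hconn hreg hdeg ρ hs hib hi'b (by omega) (by omega) hkb
  have hcardS : (S.card : ℝ)
      = ((Finset.Icc a₁ b₁).card : ℝ) * ((Finset.Icc a₁ b₁).card : ℝ)
        * ((Finset.Icc a₂ b₂).card : ℝ) * ((Finset.Icc a₃ b₃).card : ℝ) := by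
    simp only [hS, Finset.card_product]
    push_cast
    ring
  calc walkProb G ρ b₃ (fun w =>
        (walkRange w (Finset.Icc a₁ b₁) ∩ walkRange w (Finset.Icc a₂ b₂)).Nonempty ∧
        (walkRange w (Finset.Icc a₁ b₁) ∩ walkRange w (Finset.Icc a₃ b₃)).Nonempty)
      ≤ ∑ q ∈ S, walkProb G ρ b₃
          (fun w => w q.1.1 = w q.2.1 ∧ w q.1.2 = w q.2.2) := hunion
    _ ≤ ∑ _q ∈ S, 2 / ((Fintype.card V : ℝ)) ^ 2 := Finset.sum_le_sum hquad
    _ = (S.card : ℝ) * (2 / ((Fintype.card V : ℝ)) ^ 2) := by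
        rw [Finset.sum_const, nsmul_eq_mul]
    _ = ((Finset.Icc a₁ b₁).card : ℝ) * ((Finset.Icc a₁ b₁).card : ℝ)
        * ((Finset.Icc a₂ b₂).card : ℝ) * ((Finset.Icc a₃ b₃).card : ℝ)
        * (2 / ((Fintype.card V : ℝ)) ^ 2) := by rw [hcardS]
    _ ≤ 8 * ((Finset.Icc a₁ b₁).card : ℝ) ^ 2 * ((Finset.Icc a₂ b₂).card : ℝ) *
        ((Finset.Icc a₃ b₃).card : ℝ) / ((Fintype.card V : ℝ)) ^ 2 := by
        have h1 : ((Finset.Icc a₁ b₁).card : ℝ) * ((Finset.Icc a₁ b₁).card : ℝ)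
            * ((Finset.Icc a₂ b₂).card : ℝ) * ((Finset.Icc a₃ b₃).card : ℝ)
            * (2 / ((Fintype.card V : ℝ)) ^ 2)
            = (2 * (((Finset.Icc a₁ b₁).card : ℝ) ^ 2 * ((Finset.Icc a₂ b₂).card : ℝ)
              * ((Finset.Icc a₃ b₃).card : ℝ))) / ((Fintype.card V : ℝ)) ^ 2 := by
          ring
        have h2 : 8 * ((Finset.Icc a₁ b₁).card : ℝ) ^ 2 * ((Finset.Icc a₂ b₂).card : ℝ) *
            ((Finset.Icc a₃ b₃).card : ℝ) / ((Fintype.card V : ℝ)) ^ 2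
            = (8 * (((Finset.Icc a₁ b₁).card : ℝ) ^ 2 * ((Finset.Icc a₂ b₂).card : ℝ)
              * ((Finset.Icc a₃ b₃).card : ℝ))) / ((Fintype.card V : ℝ)) ^ 2 := by
          ring
        rw [h1, h2]
        have hX : (0:ℝ) ≤ ((Finset.Icc a₁ b₁).card : ℝ) ^ 2 * ((Finset.Icc a₂ b₂).card : ℝ)
            * ((Finset.Icc a₃ b₃).card : ℝ) := by positivity
        gcongr
        linarith
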